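/- Let n ≥ 1 and let Θ ⊆ {0,1}ⁿ with |Θ| = f ≥ 1 and 𝟎 ∈ Θ, where 𝟎 is the all-zero string. Let X be the random input with Pr(X = 𝟎) = 1/2 and Pr(X = x) = 1/(2(2ⁿ − 1)) for every x ≠ 𝟎, and let Y be the output of V_Θ on input X. Then I(X;Y) ≥ (1/2)·log₂( 2 / (1 + (2ⁿ − f)/(2ⁿ(2ⁿ − 1))) ). (In particular, this lower bound tends to 1/2 as n → ∞, so the identity code on this channel family is not semantically secure.) -/

import Mathlib

open scoped BigOperators

noncomputable section

/-- A probability distribution on a finite type. -/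
def IsProbDist {α : Type} [Fintype α] (p : α → ℝ) : Prop :=
  (∀ a, 0 ≤ p a) ∧ (∑ a, p a) = 1

/-- Output distribution of channel `V` under random encoder `Φ` on message `u`. -/
def Zout {U X Z : Type} [Fintype X] (Φ : U → X → ℝ) (V : X → Z → ℝ) (u : U) (z : Z) : ℝ :=
  ∑ x, Φ u x * V x z

/-- Probability that the decoder `ψ` fails on message `u`. -/
def errProb {U X Y : Type} [Fintype X] [Fintype Y] [DecidableEq U]
    (W : X → Y → ℝ) (Φ : U → X → ℝ) (ψ : Y → U) (u : U) : ℝ :=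
  ∑ y, (if ψ y ≠ u then Zout Φ W u y else 0)

/-- Shannon mutual information in bits (logarithm base 2) of the joint law `p u * q u z`. -/
def mutualInfo2 {U Z : Type} [Fintype U] [Fintype Z] (p : U → ℝ) (q : U → Z → ℝ) : ℝ :=
  ∑ u, ∑ z, p u * q u z * Real.logb 2 (q u z / (∑ v, p v * q v z))

/-- The channel `V_Θ` on `{0,1}ⁿ`: the identity channel on inputs in `Θ` and the completely
noisy (uniform-output) channel on inputs outside `Θ`. -/
def Vtheta (n : ℕ) (Θ : Finset (Fin n → Bool)) (x y : Fin n → Bool) : ℝ :=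
  if x ∈ Θ then (if y = x then 1 else 0) else ((2:ℝ) ^ n)⁻¹

lemma gibbs_aux {Z : Type} [Fintype Z] (v q : Z → ℝ)
    (hv : ∀ z, 0 ≤ v z) (hq : ∀ z, 0 < q z)
    (hvs : ∑ z, v z = 1) (hqs : ∑ z, q z = 1) :
    0 ≤ ∑ z, v z * Real.logb 2 (v z / q z) := by
  have hlog2 : (0:ℝ) < Real.log 2 := Real.log_pos (by norm_num)
  have h1 : ∀ z : Z, (v z - q z) / Real.log 2 ≤ v z * Real.logb 2 (v z / q z) := by
    intro z
    rcases eq_or_lt_of_le (hv z) with h | h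
    · rw [← h]
      simp [Real.logb]
      exact div_nonpos_of_nonpos_of_nonneg (by linarith [hq z]) (le_of_lt hlog2)
    · have hqv : 0 < q z / v z := div_pos (hq z) h
      have hls := Real.log_le_sub_one_of_pos hqv
      have hlogeq : Real.log (v z / q z) = - Real.log (q z / v z) := by
        rw [← Real.log_inv, inv_div]
      have h2 : v z * Real.log (q z / v z) ≤ v z * (q z / v z - 1) :=
        mul_le_mul_of_nonneg_left hls (le_of_lt h)
      have h3 : v z * (q z / v z - 1) = q z - v z := by field_simp
      rw [Real.logb, hlogeq, ← mul_div_assoc, div_le_div_iff_of_pos_right hlog2]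
      nlinarith
  calc (0:ℝ) = ∑ z, (v z - q z) / Real.log 2 := by
        rw [← Finset.sum_div, Finset.sum_sub_distrib, hvs, hqs]; simp
    _ ≤ _ := Finset.sum_le_sum (fun z _ => h1 z)

/-- **Statement 15.** For `Θ ⊆ {0,1}ⁿ` with `|Θ| = f ≥ 1` and `𝟎 ∈ Θ`, and the input `X`
with `Pr(X = 𝟎) = 1/2` and `Pr(X = x) = 1/(2(2ⁿ−1))` for `x ≠ 𝟎`, the mutual information
of `X` and the output of `V_Θ` satisfies
`I(X;Y) ≥ (1/2)·log₂( 2 / (1 + (2ⁿ−f)/(2ⁿ(2ⁿ−1))) )`. -/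
theorem mutualInfo_Vtheta_not_semantic (n : ℕ) (hn : 1 ≤ n)
    (Θ : Finset (Fin n → Bool)) (f : ℕ) (hcard : Θ.card = f) (hf : 1 ≤ f)
    (h0 : (fun _ => false) ∈ Θ) :
    (1/2) * Real.logb 2
        (2 / (1 + ((2:ℝ) ^ n - f) / ((2:ℝ) ^ n * ((2:ℝ) ^ n - 1))))
      ≤ mutualInfo2
          (fun x : Fin n → Bool =>
            if x = (fun _ => false) then (1:ℝ)/2 else 1 / (2 * ((2:ℝ) ^ n - 1)))
          (Vtheta n Θ) := by
  classical
  set z0 : Fin n → Bool := fun _ => false with hz0def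
  set N : ℝ := (2:ℝ) ^ n with hNdef
  set p : (Fin n → Bool) → ℝ :=
    fun x => if x = z0 then (1:ℝ)/2 else 1 / (2 * (N - 1)) with hpdef
  set V := Vtheta n Θ with hVdef
  set Q : (Fin n → Bool) → ℝ := fun z => ∑ v, p v * V v z with hQdef
  have hcardα : Fintype.card (Fin n → Bool) = 2 ^ n := by simp
  have hN1 : (1:ℝ) < N := by
    rw [hNdef]
    exact one_lt_pow₀ (by norm_num) (by omega)
  have hNpos : (0:ℝ) < N := by linarith
  have hN1pos : (0:ℝ) < N - 1 := by linarith
  have hcpos : (0:ℝ) < 1 / (2 * (N - 1)) := by positivity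
  have hp_pos : ∀ x, 0 < p x := by
    intro x
    rw [hpdef]; dsimp only
    split
    · norm_num
    · exact hcpos
  have hNcast : ((2 ^ n : ℕ) : ℝ) = N := by rw [hNdef]; push_cast; ring
  have hfN : f ≤ 2 ^ n := by
    rw [← hcard, ← hcardα]
    exact Finset.card_le_univ Θ
  -- sum of p is 1
  have hp_sum : ∑ x, p x = 1 := by
    rw [← Finset.add_sum_erase _ p (Finset.mem_univ z0)]
    have h1 : p z0 = 1/2 := by simp [hpdef]
    have h2 : ∑ x ∈ Finset.univ.erase z0, p x
        = (Finset.univ.erase z0).card * (1 / (2 * (N - 1))) := by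
      rw [Finset.sum_congr rfl (fun x hx => ?_), Finset.sum_const, nsmul_eq_mul]
      have hxne : x ≠ z0 := (Finset.mem_erase.mp hx).1
      simp [hpdef, hxne]
    have h3 : ((Finset.univ.erase z0).card : ℝ) = N - 1 := by
      rw [Finset.card_erase_of_mem (Finset.mem_univ z0), Finset.card_univ, hcardα]
      rw [Nat.cast_sub (by omega : 1 ≤ 2 ^ n), hNcast]
      norm_num
    rw [h1, h2, h3]
    field_simp
    ring
  -- channel rows: nonneg and sum to 1
  have hV_nonneg : ∀ x z, 0 ≤ V x z := by
    intro x z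
    rw [hVdef, Vtheta]
    split
    · split <;> norm_num
    · positivity
  have hV_sum : ∀ x, ∑ z, V x z = 1 := by
    intro x
    rw [hVdef]
    unfold Vtheta
    by_cases hx : x ∈ Θ
    · simp [hx]
    · simp only [hx, if_false]
      rw [Finset.sum_const, Finset.card_univ, hcardα, nsmul_eq_mul, hNcast]
      field_simp
      exact hNdef
  have hQ_pos : ∀ z, 0 < Q z := by
    intro z
    have hzz : 0 < V z z := by
      rw [hVdef, Vtheta]
      split
      · simp
      · positivity
    have : 0 < p z * V z z := mul_pos (hp_pos z) hzz
    refine lt_of_lt_of_le this ?_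
    exact Finset.single_le_sum
      (fun v _ => mul_nonneg (le_of_lt (hp_pos v)) (hV_nonneg v z)) (Finset.mem_univ z)
  have hQ_sum : ∑ z, Q z = 1 := by
    rw [hQdef]
    dsimp only
    rw [Finset.sum_comm]
    calc ∑ v, ∑ z, p v * V v z = ∑ v, p v * ∑ z, V v z := by
          simp_rw [Finset.mul_sum]
      _ = 1 := by simp_rw [hV_sum]; simpa using hp_sum
  -- row at z0 is the identity row
  have hV0 : ∀ z, V z0 z = if z = z0 then 1 else 0 := by
    intro z
    rw [hVdef, Vtheta, if_pos h0]
  -- compute Q z0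
  have hQ0 : Q z0 = (1 + (N - f) / (N * (N - 1))) / 2 := by
    have hsplit : Q z0 = ∑ v ∈ Θ, p v * V v z0 + ∑ v ∈ Θᶜ, p v * V v z0 :=
      (Finset.sum_add_sum_compl Θ _).symm
    have hΘ : ∑ v ∈ Θ, p v * V v z0 = 1/2 := by
      rw [Finset.sum_congr rfl (fun v hv => ?_)]
      · rw [Finset.sum_ite_eq Θ z0 p, if_pos h0]
        simp [hpdef]
      · rw [hVdef, Vtheta, if_pos hv]
        by_cases h : z0 = v
        · simp [h]
        · simp [h, Ne.symm h]
    have hΘc : ∑ v ∈ Θᶜ, p v * V v z0 = (N - f) * (1 / (2 * (N - 1)) * N⁻¹) := by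
      rw [Finset.sum_congr rfl (fun v hv => ?_), Finset.sum_const, nsmul_eq_mul]
      · congr 1
        rw [Finset.card_compl, hcardα, hcard, Nat.cast_sub hfN, hNcast]
      · have hvΘ : v ∉ Θ := Finset.mem_compl.mp hv
        have hvne : v ≠ z0 := fun h => hvΘ (h ▸ h0)
        rw [hVdef, Vtheta, if_neg hvΘ, ← hNdef]
        simp [hpdef, hvne]
    rw [hsplit, hΘ, hΘc]
    field_simp
  -- the u = z0 term of the mutual information
  have hterm0 : ∑ z, p z0 * V z0 z * Real.logb 2 (V z0 z / Q z)
      = (1/2) * Real.logb 2 (1 / Q z0) := by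
    rw [Finset.sum_eq_single z0]
    · simp [hV0, hpdef]
    · intro b _ hb
      simp [hV0, hb]
    · intro h; exact absurd (Finset.mem_univ _) h
  -- decomposition of mutual information
  have hdecomp : mutualInfo2 p V
      = (∑ z, p z0 * V z0 z * Real.logb 2 (V z0 z / Q z))
        + ∑ u ∈ Finset.univ.erase z0, ∑ z, p u * V u z * Real.logb 2 (V u z / Q z) := by
    rw [mutualInfo2]
    exact (Finset.add_sum_erase _ _ (Finset.mem_univ z0)).symm
  have hrest : 0 ≤ ∑ u ∈ Finset.univ.erase z0,
      ∑ z, p u * V u z * Real.logb 2 (V u z / Q z) := by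
    refine Finset.sum_nonneg fun u _ => ?_
    have : ∑ z, p u * V u z * Real.logb 2 (V u z / Q z)
        = p u * ∑ z, V u z * Real.logb 2 (V u z / Q z) := by
      rw [Finset.mul_sum]
      exact Finset.sum_congr rfl fun z _ => by ring
    rw [this]
    exact mul_nonneg (le_of_lt (hp_pos u))
      (gibbs_aux (V u) Q (hV_nonneg u) hQ_pos (hV_sum u) hQ_sum)
  have hQ0inv : 1 / Q z0 = 2 / (1 + (N - f) / (N * (N - 1))) := by
    rw [hQ0, one_div_div]
  calc (1/2) * Real.logb 2 (2 / (1 + (N - (f:ℝ)) / (N * (N - 1))))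
      = (1/2) * Real.logb 2 (1 / Q z0) := by rw [hQ0inv]
    _ = ∑ z, p z0 * V z0 z * Real.logb 2 (V z0 z / Q z) := hterm0.symm
    _ ≤ mutualInfo2 p V := by rw [hdecomp]; linarith

end
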